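/- arXiv:1403.7946 — 5 statements merged into one kernel-verified Lean document; each statement's English description precedes it below -/
import Mathlib

section
/- For any A, B in Sp(2g,ℤ) (or Sp(2g,ℝ)), the bilinear form ⟨(x₁,y₁),(x₂,y₂)⟩_{A,B} := (x₁+y₁)·J(I−B)y₂ on the vector space V_{A,B} = {(x,y) ∈ ℝ^{2g}×ℝ^{2g} : (A⁻¹−I)x + (B−I)y = 0} is symmetric. -/
open Matrix

/-- The standard symplectic matrix J = [[0, I_g], [-I_g, 0]]. -/
def Jstd (g : ℕ) : Matrix (Fin g ⊕ Fin g) (Fin g ⊕ Fin g) ℝ :=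
  Matrix.fromBlocks 0 1 (-1) 0

lemma Jstd_eq_neg_J (g : ℕ) : Jstd g = -(Matrix.J (Fin g) ℝ) := by
  rw [Jstd, Matrix.J, Matrix.fromBlocks_neg, neg_zero, neg_neg]

lemma Jstd_transpose (g : ℕ) : (Jstd g)ᵀ = -(Jstd g) := by
  rw [Jstd_eq_neg_J]; simp

/-- Moving a matrix across the form: if `Mᵀ * K = K * N` then
`(M u) ⬝ᵥ K v = u ⬝ᵥ K (N v)`. -/
lemma omega_move {g : ℕ} {M N : Matrix (Fin g ⊕ Fin g) (Fin g ⊕ Fin g) ℝ}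
    (h : Mᵀ * Jstd g = Jstd g * N) (u v : Fin g ⊕ Fin g → ℝ) :
    (M.mulVec u) ⬝ᵥ ((Jstd g).mulVec v) = u ⬝ᵥ ((Jstd g).mulVec (N.mulVec v)) := by
  rw [Matrix.mulVec_mulVec, Matrix.dotProduct_mulVec, Matrix.dotProduct_mulVec,
    ← Matrix.vecMul_transpose, Matrix.vecMul_vecMul, h]

lemma omega_skew {g : ℕ} (u v : Fin g ⊕ Fin g → ℝ) :
    u ⬝ᵥ ((Jstd g).mulVec v) = -(v ⬝ᵥ ((Jstd g).mulVec u)) := by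
  rw [Matrix.dotProduct_mulVec, ← Matrix.mulVec_transpose, Jstd_transpose,
    Matrix.neg_mulVec, neg_dotProduct, dotProduct_comm]

/-- The Meyer bilinear form ⟨(x₁,y₁),(x₂,y₂)⟩_{A,B} = (x₁+y₁)·J(I−B)y₂ is symmetric
on V_{A,B} = {(x,y) : (A⁻¹−I)x + (B−I)y = 0}. -/
theorem meyer_form_symm (g : ℕ) (A B : Matrix (Fin g ⊕ Fin g) (Fin g ⊕ Fin g) ℝ)
    (hA : A ∈ Matrix.symplecticGroup (Fin g) ℝ)
    (hB : B ∈ Matrix.symplecticGroup (Fin g) ℝ)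
    (x₁ y₁ x₂ y₂ : Fin g ⊕ Fin g → ℝ)
    (h1 : (A⁻¹ - 1).mulVec x₁ + (B - 1).mulVec y₁ = 0)
    (h2 : (A⁻¹ - 1).mulVec x₂ + (B - 1).mulVec y₂ = 0) :
    (x₁ + y₁) ⬝ᵥ ((Jstd g * (1 - B)).mulVec y₂)
      = (x₂ + y₂) ⬝ᵥ ((Jstd g * (1 - B)).mulVec y₁) := by
  have hAd : IsUnit A.det := SymplecticGroup.symplectic_det hA
  have hBd : IsUnit B.det := SymplecticGroup.symplectic_det hB
  have hAmul : A * A⁻¹ = 1 := Matrix.mul_nonsing_inv A hAd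
  have hBmul' : B * B⁻¹ = 1 := Matrix.mul_nonsing_inv B hBd
  set K := Jstd g with hK
  -- symplectic relations for K
  have hA' : Aᵀ * K * A = K := by
    have h := (SymplecticGroup.mem_iff').mp hA
    rw [hK, Jstd_eq_neg_J]
    simp only [Matrix.mul_neg, Matrix.neg_mul, h]
  have hB' : Bᵀ * K * B = K := by
    have h := (SymplecticGroup.mem_iff').mp hB
    rw [hK, Jstd_eq_neg_J]
    simp only [Matrix.mul_neg, Matrix.neg_mul, h]
  have hA2 : (A⁻¹)ᵀ * K = K * A := by
    have h := congrArg (fun M => (A⁻¹)ᵀ * M) hA'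
    simp only [← Matrix.mul_assoc] at h
    have hT : (A⁻¹)ᵀ * Aᵀ = 1 := by
      rw [← Matrix.transpose_mul, hAmul, Matrix.transpose_one]
    rw [hT, Matrix.one_mul] at h
    exact h.symm
  have hB1 : Bᵀ * K = K * B⁻¹ := by
    have h := congrArg (fun M => M * B⁻¹) hB'
    simp only [Matrix.mul_assoc] at h
    rwa [hBmul', Matrix.mul_one] at h
  -- constraints rephrased
  have neg1B : (1 : Matrix (Fin g ⊕ Fin g) (Fin g ⊕ Fin g) ℝ) - B = -(B - 1) := (neg_sub _ _).symm
  have hc1 : (A⁻¹ - 1).mulVec x₁ = (1 - B).mulVec y₁ := by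
    rw [eq_neg_of_add_eq_zero_left h1, neg1B, Matrix.neg_mulVec]
  have hc2 : (A⁻¹ - 1).mulVec x₂ = (1 - B).mulVec y₂ := by
    rw [eq_neg_of_add_eq_zero_left h2, neg1B, Matrix.neg_mulVec]
  set c₁ := (1 - B).mulVec y₁ with hc₁def
  set c₂ := (1 - B).mulVec y₂ with hc₂def
  rw [show (K * (1 - B)).mulVec y₂ = K.mulVec c₂ from (Matrix.mulVec_mulVec ..).symm,
      show (K * (1 - B)).mulVec y₁ = K.mulVec c₁ from (Matrix.mulVec_mulVec ..).symm]
  -- key transfer identities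
  have mA : (A⁻¹ - 1)ᵀ * K = K * (A - 1) := by
    rw [Matrix.transpose_sub, Matrix.transpose_one, Matrix.sub_mul, Matrix.mul_sub, hA2,
      Matrix.one_mul, Matrix.mul_one]
  have mB : (1 - B)ᵀ * K = K * (1 - B⁻¹) := by
    rw [Matrix.transpose_sub, Matrix.transpose_one, Matrix.sub_mul, Matrix.mul_sub, hB1,
      Matrix.one_mul, Matrix.mul_one]
  have mA' : (1 - A⁻¹)ᵀ * K = K * (1 - A) := by
    rw [Matrix.transpose_sub, Matrix.transpose_one, Matrix.sub_mul, Matrix.mul_sub, hA2,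
      Matrix.one_mul, Matrix.mul_one]
  have e1 : c₁ ⬝ᵥ K.mulVec x₂ = x₁ ⬝ᵥ K.mulVec ((A - 1).mulVec x₂) := by
    rw [← hc1]; exact omega_move mA x₁ x₂
  have e2 : c₁ ⬝ᵥ K.mulVec y₂ = y₁ ⬝ᵥ K.mulVec ((1 - B⁻¹).mulVec y₂) := by
    rw [hc₁def]; exact omega_move mB y₁ y₂
  -- combining vectors
  have v3 : c₂ + (A - 1).mulVec x₂ = (1 - A).mulVec c₂ := by
    have hAc : A.mulVec c₂ = (1 - A).mulVec x₂ := by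
      rw [← hc2, Matrix.mulVec_mulVec,
        show A * (A⁻¹ - 1) = 1 - A by rw [Matrix.mul_sub, hAmul, Matrix.mul_one]]
    simp only [Matrix.sub_mulVec, Matrix.one_mulVec, hAc]
    abel
  have v4 : c₂ + (1 - B⁻¹).mulVec y₂ = (1 - B⁻¹).mulVec c₂ := by
    have hBc : B⁻¹.mulVec c₂ = (B⁻¹ - 1).mulVec y₂ := by
      rw [hc₂def, Matrix.mulVec_mulVec,
        show B⁻¹ * (1 - B) = B⁻¹ - 1 by
          rw [Matrix.mul_sub, Matrix.mul_one, Matrix.nonsing_inv_mul B hBd]]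
    simp only [Matrix.sub_mulVec, Matrix.one_mulVec, hBc]
    abel
  have e5 : x₁ ⬝ᵥ K.mulVec ((1 - A).mulVec c₂) = ((1 - A⁻¹).mulVec x₁) ⬝ᵥ K.mulVec c₂ :=
    (omega_move mA' x₁ c₂).symm
  have e6 : y₁ ⬝ᵥ K.mulVec ((1 - B⁻¹).mulVec c₂) = ((1 - B).mulVec y₁) ⬝ᵥ K.mulVec c₂ :=
    (omega_move mB y₁ c₂).symm
  have e7 : (1 - A⁻¹).mulVec x₁ + (1 - B).mulVec y₁ = 0 := by
    have : (1 - A⁻¹).mulVec x₁ = -((A⁻¹ - 1).mulVec x₁) := by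
      rw [show (1 : Matrix (Fin g ⊕ Fin g) (Fin g ⊕ Fin g) ℝ) - A⁻¹ = -(A⁻¹ - 1) from
        (neg_sub _ _).symm, Matrix.neg_mulVec]
    rw [this, hc1, neg_add_cancel]
  have key : (x₁ + y₁) ⬝ᵥ K.mulVec c₂ + c₁ ⬝ᵥ K.mulVec (x₂ + y₂) = 0 := by
    have expand : (x₁ + y₁) ⬝ᵥ K.mulVec c₂ + c₁ ⬝ᵥ K.mulVec (x₂ + y₂)
        = (x₁ ⬝ᵥ K.mulVec c₂ + c₁ ⬝ᵥ K.mulVec x₂)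
          + (y₁ ⬝ᵥ K.mulVec c₂ + c₁ ⬝ᵥ K.mulVec y₂) := by
      rw [add_dotProduct, Matrix.mulVec_add, dotProduct_add]; ring
    rw [expand, e1, e2,
      show x₁ ⬝ᵥ K.mulVec c₂ + x₁ ⬝ᵥ K.mulVec ((A - 1).mulVec x₂)
          = x₁ ⬝ᵥ K.mulVec (c₂ + (A - 1).mulVec x₂) by
        rw [Matrix.mulVec_add, dotProduct_add],
      show y₁ ⬝ᵥ K.mulVec c₂ + y₁ ⬝ᵥ K.mulVec ((1 - B⁻¹).mulVec y₂)
          = y₁ ⬝ᵥ K.mulVec (c₂ + (1 - B⁻¹).mulVec y₂) by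
        rw [Matrix.mulVec_add, dotProduct_add],
      v3, v4, e5, e6, ← add_dotProduct, e7, zero_dotProduct]
  rw [omega_skew (x₂ + y₂) c₁]
  linarith [key]
end

section
/- The bilinear form ⟨(ξ,η),(ξ′,η′)⟩_{α,β} = μ(ξ+η, (id−β)η′) on U_{α,β} = {(ξ,η) ∈ H×H : (α⁻¹−id)ξ + (β−id)η = 0} is symmetric, for any symplectomorphisms α, β of a finite-dimensional real symplectic space (H, μ). -/
/-- The form ⟨(ξ,η),(ξ′,η′)⟩ = μ(ξ+η, (id−β)η′) is symmetric on
U_{α,β} = {(ξ,η) : (α⁻¹−id)ξ + (β−id)η = 0}. -/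
theorem U_form_symm {H : Type} [AddCommGroup H] [Module ℝ H]
    [FiniteDimensional ℝ H]
    (μ : H →ₗ[ℝ] H →ₗ[ℝ] ℝ)
    (halt : ∀ x, μ x x = 0)
    (hnd : ∀ x, (∀ y, μ x y = 0) → x = 0)
    (α β : H ≃ₗ[ℝ] H)
    (hα : ∀ x y, μ (α x) (α y) = μ x y)
    (hβ : ∀ x y, μ (β x) (β y) = μ x y)
    (ξ η ξ' η' : H)
    (h : α.symm ξ - ξ + (β η - η) = 0)
    (h' : α.symm ξ' - ξ' + (β η' - η') = 0) :
    μ (ξ + η) (η' - β η') = μ (ξ' + η') (η - β η) := by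
  have skew : ∀ x y, μ x y = - μ y x := by
    intro x y
    have h1 := halt (x + y)
    simp [map_add, LinearMap.add_apply, halt] at h1
    linarith
  have hs1 : α.symm ξ = ξ + (η - β η) := by
    have h2 : α.symm ξ - (ξ + (η - β η)) = 0 := by rw [← h]; abel
    exact sub_eq_zero.mp h2
  have hs2 : α.symm ξ' = ξ' + (η' - β η') := by
    have h2 : α.symm ξ' - (ξ' + (η' - β η')) = 0 := by rw [← h']; abel
    exact sub_eq_zero.mp h2
  have hinv : μ (ξ + (η - β η)) (ξ' + (η' - β η')) = μ ξ ξ' := by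
    rw [← hs1, ← hs2]
    have := hα (α.symm ξ) (α.symm ξ')
    simpa using this.symm
  have hb := hβ η η'
  simp only [map_add, map_sub, LinearMap.add_apply, LinearMap.sub_apply] at hinv ⊢
  linarith [hinv, hb, skew ξ ξ', skew η ξ', skew (β η) ξ', skew ξ η', skew η η',
    skew (β η) η', skew ξ (β η'), skew η (β η'), skew (β η) (β η')]
end

section
/- Let τ : G × G → ℤ be a function on a group G that is a normalized 2-cocycle, i.e., τ(g,1) = τ(1,g) = 0 for all g and τ(g₁,g₂) + τ(g₁g₂,g₃) = τ(g₁, g₂g₃) + τ(g₂,g₃) for all g₁,g₂,g₃. Define, for a word w = α₁⋯α_n with α₁⋯α_n = 1 in G, I(w) := −Σ_{j=1}^{n−1} τ(α_{n−j}, α_{n−j+1}⋯α_n). Then I is invariant under cyclic permutation when τ is additionally symmetric (τ(g,h) = τ(h,g)) and conjugation-invariant (τ(kgk⁻¹, khk⁻¹) = τ(g,h)): that is, I(α₁α₂⋯α_n) = I(α₂⋯α_nα₁). -/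
/-- I(w) = −Σ_{j=1}^{n−1} τ(α_{n−j}, α_{n−j+1}⋯α_n), i.e. minus the sum over
positions i = 1, …, n−1 of τ(αᵢ, α_{i+1}⋯α_n). -/
def Iword {G : Type} [Group G] (τ : G → G → ℤ) (l : List G) : ℤ :=
  -∑ i ∈ Finset.range (l.length - 1), τ (l.getD i 1) ((l.drop (i + 1)).prod)

private lemma Iword_key {G : Type} [Group G] (τ : G → G → ℤ)
    (hcoc : ∀ g₁ g₂ g₃ : G, τ g₁ g₂ + τ (g₁ * g₂) g₃ = τ g₁ (g₂ * g₃) + τ g₂ g₃)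
    (a : G) : ∀ l : List G,
    ∑ i ∈ Finset.range l.length, τ (l.getD i 1) ((l.drop (i + 1)).prod * a)
      = ∑ i ∈ Finset.range l.length, τ (l.getD i 1) ((l.drop (i + 1)).prod)
        + τ l.prod a - τ 1 a := by
  intro l
  induction l with
  | nil => simp
  | cons x l ih =>
    rw [List.length_cons, Finset.sum_range_succ', Finset.sum_range_succ' (n := l.length)]
    simp only [List.getD_cons_succ, List.getD_cons_zero, List.drop_succ_cons,
      List.drop_zero, List.prod_cons]
    rw [ih]
    linarith [hcoc x l.prod a]

/-- For a normalized, symmetric, conjugation-invariant 2-cocycle τ, the quantity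
I(w) is invariant under cyclic permutation of a word whose product is 1. -/
theorem Iword_cyclic {G : Type} [Group G] (τ : G → G → ℤ)
    (hnorm : ∀ g : G, τ g 1 = 0 ∧ τ 1 g = 0)
    (hcoc : ∀ g₁ g₂ g₃ : G, τ g₁ g₂ + τ (g₁ * g₂) g₃ = τ g₁ (g₂ * g₃) + τ g₂ g₃)
    (hsym : ∀ g h : G, τ g h = τ h g)
    (hconj : ∀ k g h : G, τ (k * g * k⁻¹) (k * h * k⁻¹) = τ g h)
    (a : G) (l : List G) (hprod : (a :: l).prod = 1) :
    Iword τ (a :: l) = Iword τ (l ++ [a]) := by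
  have hla : l.prod = a⁻¹ := by
    rw [List.prod_cons] at hprod
    exact (inv_eq_of_mul_eq_one_right hprod).symm
  rcases l with _ | ⟨x, t⟩
  · rfl
  unfold Iword
  congr 1
  have h1 : ((x :: t) ++ [a]).length - 1 = t.length + 1 := by simp
  have h2 : (a :: x :: t).length - 1 = t.length + 1 := by simp
  rw [h1, h2]
  have hR : ∑ i ∈ Finset.range (t.length + 1),
      τ (((x :: t) ++ [a]).getD i 1) ((((x :: t) ++ [a]).drop (i + 1)).prod)
      = ∑ i ∈ Finset.range (t.length + 1),
      τ ((x :: t).getD i 1) (((x :: t).drop (i + 1)).prod * a) := by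
    apply Finset.sum_congr rfl
    intro i hi
    rw [Finset.mem_range] at hi
    rw [List.getD_append _ _ _ _ (by simpa using hi),
      List.drop_append_of_le_length (by simp; omega),
      List.prod_append, List.prod_singleton]
  rw [hR]
  have hK := Iword_key τ hcoc a (x :: t)
  rw [List.length_cons] at hK
  rw [hK, hla, (hnorm a).2, Finset.sum_range_succ' (n := t.length),
    Finset.sum_range_succ (n := t.length)]
  simp only [List.getD_cons_succ, List.getD_cons_zero, List.drop_succ_cons, List.drop_zero]
  rw [hla, List.drop_length]
  simp only [List.prod_nil, (hnorm _).1]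
  rw [hsym a a⁻¹]
  ring
end

section
/- Let τ : G × G → ℤ be a normalized 2-cocycle on a group G. For words w = α₁⋯α_m and w′ = β₁⋯β_n in G with α₁⋯α_m = 1 and β₁⋯β_n = 1, define I(w) = −Σ_{j=1}^{m−1} τ(α_{m−j}, α_{m−j+1}⋯α_m). Then I is additive under concatenation: I(ww′) = I(w) + I(w′). -/
/-- For a normalized 2-cocycle τ, I is additive under concatenation of words whose
products are the identity. -/
theorem Iword_additive {G : Type} [Group G] (τ : G → G → ℤ)
    (hnorm : ∀ g : G, τ g 1 = 0 ∧ τ 1 g = 0)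
    (hcoc : ∀ g₁ g₂ g₃ : G, τ g₁ g₂ + τ (g₁ * g₂) g₃ = τ g₁ (g₂ * g₃) + τ g₂ g₃)
    (l₁ l₂ : List G) (h₁ : l₁.prod = 1) (h₂ : l₂.prod = 1) :
    Iword τ (l₁ ++ l₂) = Iword τ l₁ + Iword τ l₂ := by
  rcases eq_or_ne l₁ [] with rfl | h1ne
  · simp [Iword]
  rcases eq_or_ne l₂ [] with rfl | h2ne
  · simp [Iword]
  have hm : 1 ≤ l₁.length := List.length_pos_iff.mpr h1ne
  have hn : 1 ≤ l₂.length := List.length_pos_iff.mpr h2ne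
  unfold Iword
  rw [List.length_append,
    show l₁.length + l₂.length - 1 = l₁.length + (l₂.length - 1) from by omega,
    Finset.sum_range_add]
  have hA : ∑ i ∈ Finset.range l₁.length,
      τ ((l₁ ++ l₂).getD i 1) ((l₁ ++ l₂).drop (i + 1)).prod
      = ∑ i ∈ Finset.range (l₁.length - 1),
        τ (l₁.getD i 1) ((l₁.drop (i + 1)).prod) := by
    rw [show l₁.length = (l₁.length - 1) + 1 from by omega, Finset.sum_range_succ]
    have hlast : (l₁ ++ l₂).drop (l₁.length - 1 + 1) = l₂ := by
      rw [show l₁.length - 1 + 1 = l₁.length from by omega, List.drop_left]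
    rw [hlast, h₂, (hnorm _).1, add_zero]
    refine Finset.sum_congr rfl fun i hi => ?_
    have hi' : i < l₁.length - 1 := Finset.mem_range.mp hi
    rw [List.getD_append _ _ _ _ (by omega),
      List.drop_append_of_le_length (by omega), List.prod_append, h₂, mul_one]
  have hB : ∑ j ∈ Finset.range (l₂.length - 1),
      τ ((l₁ ++ l₂).getD (l₁.length + j) 1) ((l₁ ++ l₂).drop (l₁.length + j + 1)).prod
      = ∑ j ∈ Finset.range (l₂.length - 1),
        τ (l₂.getD j 1) ((l₂.drop (j + 1)).prod) := by
    refine Finset.sum_congr rfl fun j hj => ?_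
    rw [List.getD_append_right _ _ _ _ (by omega),
      show l₁.length + j - l₁.length = j from by omega,
      show l₁.length + j + 1 = l₁.length + (j + 1) from by omega,
      List.drop_append, List.drop_eq_nil_of_le (by omega : l₁.length ≤ l₁.length + (j + 1)),
      List.nil_append, Nat.add_sub_cancel_left]
  rw [hA, hB]
  ring
end

section
/- Let (V, ω) be a finite-dimensional real symplectic vector space and L₁, L₂, L₃ Lagrangian subspaces. The Wall–Maslov form Ψ on W = (L₃ + L₁) ∩ L₂, Ψ(v, w) = ω(v, w₃) for any decomposition w = w₁ + w₃ with wᵢ ∈ Lᵢ, is a symmetric bilinear form on W. -/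
/-- The Wall–Maslov form Ψ(v,w) = ω(v,w₃) on W = (L₃+L₁) ∩ L₂ is symmetric. -/
theorem wall_form_symm {V : Type} [AddCommGroup V] [Module ℝ V]
    [FiniteDimensional ℝ V]
    (ω : V →ₗ[ℝ] V →ₗ[ℝ] ℝ)
    (halt : ∀ x, ω x x = 0)
    (hnd : ∀ x, (∀ y, ω x y = 0) → x = 0)
    (L₁ L₂ L₃ : Submodule ℝ V)
    (hL₁ : (∀ x ∈ L₁, ∀ y ∈ L₁, ω x y = 0) ∧
      Module.finrank ℝ L₁ = Module.finrank ℝ V / 2)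
    (hL₂ : (∀ x ∈ L₂, ∀ y ∈ L₂, ω x y = 0) ∧
      Module.finrank ℝ L₂ = Module.finrank ℝ V / 2)
    (hL₃ : (∀ x ∈ L₃, ∀ y ∈ L₃, ω x y = 0) ∧
      Module.finrank ℝ L₃ = Module.finrank ℝ V / 2)
    (v w : V) (hv : v ∈ (L₃ ⊔ L₁) ⊓ L₂) (hw : w ∈ (L₃ ⊔ L₁) ⊓ L₂)
    (v₁ v₃ w₁ w₃ : V)
    (hv₁ : v₁ ∈ L₁) (hv₃ : v₃ ∈ L₃) (hw₁ : w₁ ∈ L₁) (hw₃ : w₃ ∈ L₃)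
    (hvdec : v = v₁ + v₃) (hwdec : w = w₁ + w₃) :
    ω v w₃ = ω w v₃ := by
  have skew : ∀ x y, ω x y = - ω y x := by
    intro x y
    have h := halt (x + y)
    simp only [map_add, LinearMap.add_apply, halt] at h
    linarith
  have h2 : ω v w = 0 := hL₂.1 v hv.2 w hw.2
  have h1 : ω v₁ w₁ = 0 := hL₁.1 v₁ hv₁ w₁ hw₁
  have h3 : ω w₃ v₃ = 0 := hL₃.1 w₃ hw₃ v₃ hv₃
  have e1 : ω v w₃ = - (ω v₃ w₁) := by
    have := h2
    rw [hvdec, hwdec] at this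
    rw [hvdec]
    simp only [map_add, LinearMap.add_apply] at this ⊢
    have h4 : ω v₃ w₃ = 0 := hL₃.1 v₃ hv₃ w₃ hw₃
    linarith
  have e2 : ω w v₃ = ω w₁ v₃ := by
    rw [hwdec]
    simp only [map_add, LinearMap.add_apply]
    rw [skew w₃ v₃] at h3 ⊢
    linarith
  rw [e1, e2, skew w₁ v₃]
end
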